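/- Let P_0, …, P_9 be a symmetric Clifford system on ℝ^{32}. Then the operators T_{ij} = P_{2i}P_{2i+1}P_{2j}P_{2j+1}, 0 ≤ i < j ≤ 4, are symmetric, satisfy T_{ij}² = Id, and pairwise commute; consequently there exists a unit vector x ∈ ℝ^{32} which is a common eigenvector of all the T_{ij} (with eigenvalues ±1), and every such common eigenvector x satisfies ⟨P_k x, x⟩ = 0 for all k = 0, …, 9, i.e. x lies on the focal submanifold M_+. -/

import Mathlib

open Matrix

section FkmAux

variable {R : Type*} [Ring R]

private lemma fkm_blk_sq {p q : R} (hp : p * p = 1) (hq : q * q = 1)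
    (hpq : p * q = -(q * p)) : (p * q) * (p * q) = -1 := by
  have hqp : q * p = -(p * q) := by rw [hpq, neg_neg]
  calc (p * q) * (p * q) = p * ((q * p) * q) := by noncomm_ring
    _ = p * ((-(p * q)) * q) := by rw [hqp]
    _ = -((p * p) * (q * q)) := by noncomm_ring
    _ = -1 := by rw [hp, hq, mul_one]

private lemma fkm_anti_left {p q : R} (hp : p * p = 1)
    (hpq : p * q = -(q * p)) : p * (p * q) = -((p * q) * p) := by
  have hqp : q * p = -(p * q) := by rw [hpq, neg_neg]
  have h1 : p * (p * q) = q := by rw [← mul_assoc, hp, one_mul]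
  have h2 : (p * q) * p = -q := by
    rw [mul_assoc, hqp, mul_neg, ← mul_assoc, hp, one_mul]
  rw [h1, h2, neg_neg]

private lemma fkm_anti_right {p q : R} (hq : q * q = 1)
    (hpq : p * q = -(q * p)) : q * (p * q) = -((p * q) * q) := by
  have hqp : q * p = -(p * q) := by rw [hpq, neg_neg]
  have h1 : q * (p * q) = -p := by
    rw [← mul_assoc, hqp, neg_mul, mul_assoc, hq, mul_one]
  have h2 : (p * q) * q = p := by rw [mul_assoc, hq, mul_one]
  rw [h1, h2]

private lemma fkm_comm1 {m p q : R} (hmp : m * p = -(p * m))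
    (hmq : m * q = -(q * m)) : m * (p * q) = (p * q) * m := by
  rw [← mul_assoc, hmp, neg_mul, mul_assoc, hmq, mul_neg, neg_neg, ← mul_assoc]

private lemma fkm_comm2 {p q r s : R} (hpr : p * r = -(r * p)) (hps : p * s = -(s * p))
    (hqr : q * r = -(r * q)) (hqs : q * s = -(s * q)) :
    (p * q) * (r * s) = (r * s) * (p * q) := by
  rw [mul_assoc, fkm_comm1 hqr hqs, ← mul_assoc, fkm_comm1 hpr hps, mul_assoc]

private lemma fkm_sq4 {x y : R} (hx : x * x = -1) (hy : y * y = -1)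
    (hxy : x * y = y * x) : (x * y) * (x * y) = 1 := by
  calc (x * y) * (x * y) = x * ((y * x) * y) := by noncomm_ring
    _ = x * ((x * y) * y) := by rw [← hxy]
    _ = (x * x) * (y * y) := by noncomm_ring
    _ = 1 := by rw [hx, hy]; noncomm_ring

private lemma fkm_move1 {m X Y : R} (h1 : m * X = -(X * m)) (h2 : m * Y = Y * m) :
    m * (X * Y) = -((X * Y) * m) := by
  rw [← mul_assoc, h1, neg_mul, mul_assoc, h2, ← mul_assoc]

private lemma fkm_move2 {m X Y : R} (h1 : m * X = X * m) (h2 : m * Y = -(Y * m)) :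
    m * (X * Y) = -((X * Y) * m) := by
  rw [← mul_assoc, h1, mul_assoc, h2, mul_neg, ← mul_assoc]

end FkmAux

private lemma fkm_common_eig :
    ∀ L : List (Matrix (Fin 32) (Fin 32) ℝ),
      (∀ A ∈ L, A * A = 1) → (∀ A ∈ L, ∀ B ∈ L, A * B = B * A) →
      ∀ v : Fin 32 → ℝ, v ≠ 0 → ∃ w : Fin 32 → ℝ, w ≠ 0 ∧
        ∀ A ∈ L, ∃ ε : ℝ, (ε = 1 ∨ ε = -1) ∧ A.mulVec w = ε • w := by
  intro L
  induction L with
  | nil => exact fun _ _ v hv => ⟨v, hv, by simp⟩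
  | cons T L ih =>
    intro hsq hcomm v hv
    obtain ⟨w, hw0, hwe⟩ := ih (fun A hA => hsq A (List.mem_cons_of_mem _ hA))
      (fun A hA B hB => hcomm A (List.mem_cons_of_mem _ hA) B (List.mem_cons_of_mem _ hB))
      v hv
    have hTmem : T ∈ T :: L := List.mem_cons_self
    have hTsq : T * T = 1 := hsq T hTmem
    by_cases hz : T.mulVec w + w = 0
    · refine ⟨w, hw0, ?_⟩
      intro A hA
      rcases List.mem_cons.mp hA with h | h
      · refine ⟨-1, Or.inr rfl, ?_⟩
        rw [h, eq_neg_of_add_eq_zero_left hz, neg_one_smul]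
      · exact hwe A h
    · refine ⟨T.mulVec w + w, hz, ?_⟩
      intro A hA
      rcases List.mem_cons.mp hA with h | h
      · refine ⟨1, Or.inl rfl, ?_⟩
        rw [h, one_smul, mulVec_add, mulVec_mulVec, hTsq, one_mulVec, add_comm]
      · obtain ⟨ε, hε, he⟩ := hwe A h
        refine ⟨ε, hε, ?_⟩
        have hAT : A * T = T * A := hcomm A (List.mem_cons_of_mem _ h) T hTmem
        calc A.mulVec (T.mulVec w + w)
            = A.mulVec (T.mulVec w) + A.mulVec w := mulVec_add A _ _
          _ = (A * T).mulVec w + ε • w := by rw [mulVec_mulVec, he]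
          _ = T.mulVec (A.mulVec w) + ε • w := by rw [hAT, ← mulVec_mulVec]
          _ = ε • (T.mulVec w + w) := by rw [he, mulVec_smul, smul_add]

/-- For a symmetric Clifford system `P_0, …, P_9` on `ℝ^{32}`, the
operators `T_{ij} = P_{2i} P_{2i+1} P_{2j} P_{2j+1}` (`0 ≤ i < j ≤ 4`) are
symmetric involutions which pairwise commute; consequently there is a common
unit eigenvector `x` (with eigenvalues `±1`) of all the `T_{ij}`, and every
such common eigenvector satisfies `⟨P_k x, x⟩ = 0` for all `k`, i.e. lies on
the focal submanifold `M₊`. -/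
theorem fkm_96_common_eigenvector_lies_on_Mplus
    (P : Fin 10 → Matrix (Fin 32) (Fin 32) ℝ)
    (hsymm : ∀ i, (P i).IsSymm)
    (hcliff : ∀ i j, P i * P j + P j * P i =
      if i = j then (2 : Matrix (Fin 32) (Fin 32) ℝ) else 0)
    (T : Fin 5 → Fin 5 → Matrix (Fin 32) (Fin 32) ℝ)
    (hT : ∀ i j : Fin 5, T i j =
      P ⟨2 * i.val, by have := i.isLt; omega⟩ *
      P ⟨2 * i.val + 1, by have := i.isLt; omega⟩ *
      P ⟨2 * j.val, by have := j.isLt; omega⟩ *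
      P ⟨2 * j.val + 1, by have := j.isLt; omega⟩) :
    (∀ i j : Fin 5, i < j → (T i j).IsSymm ∧ T i j * T i j = 1) ∧
    (∀ i j k n : Fin 5, i < j → k < n → T i j * T k n = T k n * T i j) ∧
    (∃ x : Fin 32 → ℝ, x ⬝ᵥ x = 1 ∧
      ∀ i j : Fin 5, i < j → ∃ ε : ℝ, (ε = 1 ∨ ε = -1) ∧
        (T i j).mulVec x = ε • x) ∧
    (∀ x : Fin 32 → ℝ, x ⬝ᵥ x = 1 →
      (∀ i j : Fin 5, i < j → ∃ ε : ℝ, (ε = 1 ∨ ε = -1) ∧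
        (T i j).mulVec x = ε • x) →
      ∀ k, (P k).mulVec x ⬝ᵥ x = 0) := by
  classical
  have hsq1 : ∀ i, P i * P i = 1 := by
    intro i
    have h := hcliff i i
    rw [if_pos rfl] at h
    have h2 : (2 : ℝ) • (P i * P i) = (2 : ℝ) • (1 : Matrix (Fin 32) (Fin 32) ℝ) := by
      rw [two_smul, two_smul]
      exact h.trans one_add_one_eq_two.symm
    have := smul_right_injective (Matrix (Fin 32) (Fin 32) ℝ)
      (two_ne_zero : (2:ℝ) ≠ 0) h2
    exact this
  have hanti : ∀ i j : Fin 10, i ≠ j → P i * P j = -(P j * P i) := by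
    intro i j hij
    have h := hcliff i j
    rw [if_neg hij] at h
    exact eq_neg_of_add_eq_zero_left h
  obtain ⟨A, hA⟩ : ∃ A : Fin 5 → Matrix (Fin 32) (Fin 32) ℝ,
      ∀ i : Fin 5, A i = P ⟨2 * i.val, by omega⟩ * P ⟨2 * i.val + 1, by omega⟩ :=
    ⟨_, fun _ => rfl⟩
  have hTA : ∀ i j : Fin 5, T i j = A i * A j := by
    intro i j
    rw [hT, hA i, hA j, mul_assoc]
  have hne10 : ∀ (a b : Fin 10), a.val ≠ b.val → a ≠ b :=
    fun a b h hab => h (congrArg Fin.val hab)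
  have hAcomm : ∀ i j : Fin 5, A i * A j = A j * A i := by
    intro i j
    rcases eq_or_ne i j with rfl | hij
    · rfl
    · have hv : i.val ≠ j.val := fun h => hij (Fin.ext h)
      rw [hA i, hA j]
      exact fkm_comm2
        (hanti _ _ (hne10 _ _ (by show 2 * i.val ≠ 2 * j.val; omega)))
        (hanti _ _ (hne10 _ _ (by show 2 * i.val ≠ 2 * j.val + 1; omega)))
        (hanti _ _ (hne10 _ _ (by show 2 * i.val + 1 ≠ 2 * j.val; omega)))
        (hanti _ _ (hne10 _ _ (by show 2 * i.val + 1 ≠ 2 * j.val + 1; omega)))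
  have hAsq : ∀ i : Fin 5, A i * A i = -1 := by
    intro i
    rw [hA i]
    exact fkm_blk_sq (hsq1 _) (hsq1 _)
      (hanti _ _ (hne10 _ _ (by show 2 * i.val ≠ 2 * i.val + 1; omega)))
  have hATr : ∀ i : Fin 5, (A i)ᵀ = -(A i) := by
    intro i
    rw [hA i, transpose_mul, (hsymm _).eq, (hsymm _).eq]
    exact hanti _ _ (hne10 _ _ (by show 2 * i.val + 1 ≠ 2 * i.val; omega))
  have hTsymm : ∀ i j : Fin 5, (T i j).IsSymm := by
    intro i j
    show (T i j)ᵀ = T i j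
    rw [hTA, transpose_mul, hATr, hATr, neg_mul_neg, hAcomm]
  have hTsq : ∀ i j : Fin 5, T i j * T i j = 1 := by
    intro i j
    rw [hTA]
    rcases eq_or_ne i j with rfl | hij
    · rw [hAsq]; noncomm_ring
    · exact fkm_sq4 (hAsq i) (hAsq j) (hAcomm i j)
  have hTcomm : ∀ i j k n : Fin 5, T i j * T k n = T k n * T i j := by
    intro i j k n
    rw [hTA, hTA]
    have hc : ∀ s t : Fin 5, Commute (A s) (A t) := fun s t => hAcomm s t
    exact (Commute.mul_left ((hc i k).mul_right (hc i n))
      ((hc j k).mul_right (hc j n))).eq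
  refine ⟨fun i j _ => ⟨hTsymm i j, hTsq i j⟩, fun i j k n _ _ => hTcomm i j k n, ?_, ?_⟩
  · set L : List (Matrix (Fin 32) (Fin 32) ℝ) :=
      ((List.finRange 5).product (List.finRange 5)).map (fun p => T p.1 p.2) with hL
    have hmemL : ∀ i j : Fin 5, T i j ∈ L := by
      intro i j
      rw [hL]
      exact List.mem_map.mpr ⟨(i, j), List.pair_mem_product.mpr
        ⟨List.mem_finRange i, List.mem_finRange j⟩, rfl⟩
    have hLsq : ∀ B ∈ L, B * B = 1 := by
      intro B hB
      obtain ⟨p, _, rfl⟩ := List.mem_map.mp hB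
      exact hTsq p.1 p.2
    have hLcomm : ∀ B ∈ L, ∀ C ∈ L, B * C = C * B := by
      intro B hB C hC
      obtain ⟨p, _, rfl⟩ := List.mem_map.mp hB
      obtain ⟨q, _, rfl⟩ := List.mem_map.mp hC
      exact hTcomm p.1 p.2 q.1 q.2
    obtain ⟨w, hw0, hwe⟩ := fkm_common_eig L hLsq hLcomm (fun _ => 1)
      (by intro h; exact one_ne_zero (congrFun h 0))
    have hq0 : (0:ℝ) ≤ w ⬝ᵥ w := Finset.sum_nonneg fun i _ => mul_self_nonneg _
    have hqpos : (0:ℝ) < w ⬝ᵥ w :=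
      lt_of_le_of_ne hq0 (fun h => hw0 (dotProduct_self_eq_zero.mp h.symm))
    set c : ℝ := (Real.sqrt (w ⬝ᵥ w))⁻¹ with hc
    refine ⟨c • w, ?_, ?_⟩
    · rw [smul_dotProduct, dotProduct_smul, hc, smul_eq_mul, smul_eq_mul,
        ← mul_assoc, ← mul_inv, Real.mul_self_sqrt hq0]
      exact inv_mul_cancel₀ (ne_of_gt hqpos)
    · intro i j _
      obtain ⟨ε, hε, he⟩ := hwe (T i j) (hmemL i j)
      exact ⟨ε, hε, by rw [mulVec_smul, he, smul_comm]⟩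
  · intro x hx hxe k
    obtain ⟨i, j, hij, hk⟩ : ∃ i j : Fin 5, i < j ∧
        (k.val = 2 * i.val ∨ k.val = 2 * i.val + 1 ∨
         k.val = 2 * j.val ∨ k.val = 2 * j.val + 1) := by
      fin_cases k <;> decide
    obtain ⟨ε, hε, he⟩ := hxe i j hij
    have hεne : ε ≠ 0 := by rcases hε with rfl | rfl <;> norm_num
    have hvij : i.val < j.val := hij
    have hPT : P k * T i j = -(T i j * P k) := by
      rw [hTA]
      have hcommi : k.val ≠ 2 * i.val → k.val ≠ 2 * i.val + 1 → P k * A i = A i * P k := by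
        intro h1 h2
        rw [hA i]
        exact fkm_comm1 (hanti _ _ (hne10 _ _ (by show k.val ≠ 2 * i.val; omega)))
          (hanti _ _ (hne10 _ _ (by show k.val ≠ 2 * i.val + 1; omega)))
      have hcommj : k.val ≠ 2 * j.val → k.val ≠ 2 * j.val + 1 → P k * A j = A j * P k := by
        intro h1 h2
        rw [hA j]
        exact fkm_comm1 (hanti _ _ (hne10 _ _ (by show k.val ≠ 2 * j.val; omega)))
          (hanti _ _ (hne10 _ _ (by show k.val ≠ 2 * j.val + 1; omega)))
      rcases hk with h | h | h | h
      · have hPk : P k = P ⟨2 * i.val, by omega⟩ := congrArg P (Fin.ext h)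
        refine fkm_move1 ?_ (hcommj (by omega) (by omega))
        rw [hA i, hPk]
        exact fkm_anti_left (hsq1 _)
          (hanti _ _ (hne10 _ _ (by show 2 * i.val ≠ 2 * i.val + 1; omega)))
      · have hPk : P k = P ⟨2 * i.val + 1, by omega⟩ := congrArg P (Fin.ext h)
        refine fkm_move1 ?_ (hcommj (by omega) (by omega))
        rw [hA i, hPk]
        exact fkm_anti_right (hsq1 _)
          (hanti _ _ (hne10 _ _ (by show 2 * i.val ≠ 2 * i.val + 1; omega)))
      · have hPk : P k = P ⟨2 * j.val, by omega⟩ := congrArg P (Fin.ext h)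
        refine fkm_move2 (hcommi (by omega) (by omega)) ?_
        rw [hA j, hPk]
        exact fkm_anti_left (hsq1 _)
          (hanti _ _ (hne10 _ _ (by show 2 * j.val ≠ 2 * j.val + 1; omega)))
      · have hPk : P k = P ⟨2 * j.val + 1, by omega⟩ := congrArg P (Fin.ext h)
        refine fkm_move2 (hcommi (by omega) (by omega)) ?_
        rw [hA j, hPk]
        exact fkm_anti_right (hsq1 _)
          (hanti _ _ (hne10 _ _ (by show 2 * j.val ≠ 2 * j.val + 1; omega)))
    have hsymT : (T i j)ᵀ = T i j := hTsymm i j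
    set u : Fin 32 → ℝ := (P k).mulVec x with hu
    have h1 : ((P k * T i j).mulVec x) ⬝ᵥ x = ε * (u ⬝ᵥ x) := by
      rw [← mulVec_mulVec, he, mulVec_smul, smul_dotProduct, smul_eq_mul, ← hu]
    have h2 : ((T i j * P k).mulVec x) ⬝ᵥ x = ε * (u ⬝ᵥ x) := by
      rw [← mulVec_mulVec, ← hu]
      calc (T i j).mulVec u ⬝ᵥ x
          = x ⬝ᵥ (T i j).mulVec u := dotProduct_comm _ _
        _ = (x ᵥ* (T i j)) ⬝ᵥ u := dotProduct_mulVec _ _ _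
        _ = ((T i j)ᵀ.mulVec x) ⬝ᵥ u := by rw [mulVec_transpose]
        _ = ((T i j).mulVec x) ⬝ᵥ u := by rw [hsymT]
        _ = (ε • x) ⬝ᵥ u := by rw [he]
        _ = ε * (x ⬝ᵥ u) := by rw [smul_dotProduct, smul_eq_mul]
        _ = ε * (u ⬝ᵥ x) := by rw [dotProduct_comm]
    have key : ε * (u ⬝ᵥ x) = -(ε * (u ⬝ᵥ x)) := by
      calc ε * (u ⬝ᵥ x) = ((P k * T i j).mulVec x) ⬝ᵥ x := h1.symm
        _ = ((-(T i j * P k)).mulVec x) ⬝ᵥ x := by rw [hPT]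
        _ = -(((T i j * P k).mulVec x) ⬝ᵥ x) := by rw [neg_mulVec, neg_dotProduct]
        _ = -(ε * (u ⬝ᵥ x)) := by rw [h2]
    have hzero : ε * (u ⬝ᵥ x) = 0 := by linarith
    exact (mul_eq_zero.mp hzero).resolve_left hεne
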